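/- For every μ ∈ (0,1) and positive integer k, define J_μ(k) = (1+k)/(1 + k·√(tanh(√μ k)/(√μ k))) - 1. Then there exists a constant C > 0 independent of μ and k such that |J_μ(k)| ≤ C · μ^{1/4} · k^{1/2}. -/

import Mathlib

private lemma sinh_le_mul_cosh {x : ℝ} (hx : 0 ≤ x) : Real.sinh x ≤ x * Real.cosh x := by
  have hder : ∀ w : ℝ, HasDerivAt (fun w : ℝ => w * Real.cosh w - Real.sinh w)
      (w * Real.sinh w) w := by
    intro w
    have h := ((hasDerivAt_id w).mul (Real.hasDerivAt_cosh w)).sub (Real.hasDerivAt_sinh w)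
    have he : w * Real.sinh w = 1 * Real.cosh w + id w * Real.sinh w - Real.cosh w := by
      simp only [id_eq]; ring
    rw [he]; exact h
  have hmono : MonotoneOn (fun w : ℝ => w * Real.cosh w - Real.sinh w) (Set.Ici 0) := by
    apply monotoneOn_of_deriv_nonneg (convex_Ici 0)
    · exact ((continuous_id.mul Real.continuous_cosh).sub Real.continuous_sinh).continuousOn
    · intro w _
      exact (hder w).differentiableAt.differentiableWithinAt
    · intro w hw
      rw [interior_Ici, Set.mem_Ioi] at hw
      rw [(hder w).deriv]
      exact mul_nonneg hw.le (Real.sinh_nonneg_iff.mpr hw.le)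
  have := hmono (Set.mem_Ici.mpr le_rfl) (Set.mem_Ici.mpr hx) hx
  simpa using this

private lemma tanh_le_self {x : ℝ} (hx : 0 ≤ x) : Real.tanh x ≤ x := by
  rw [Real.tanh_eq_sinh_div_cosh, div_le_iff₀ (Real.cosh_pos x)]
  exact sinh_le_mul_cosh hx

private lemma tanh_pos' {x : ℝ} (hx : 0 < x) : 0 < Real.tanh x := by
  rw [Real.tanh_eq_sinh_div_cosh]
  exact div_pos (by rwa [Real.sinh_pos_iff]) (Real.cosh_pos x)

private lemma cosh_le_one_add_sq {x : ℝ} (h0 : 0 ≤ x) (h1 : x ≤ 1) :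
    Real.cosh x ≤ 1 + x ^ 2 := by
  have habs : |x| ≤ 1 := by rwa [abs_of_nonneg h0]
  have habs' : |(-x)| ≤ 1 := by rwa [abs_neg]
  have hb1 := (abs_le.mp (Real.exp_bound habs (n := 2) (by norm_num))).2
  have hb2 := (abs_le.mp (Real.exp_bound habs' (n := 2) (by norm_num))).2
  norm_num [Finset.sum_range_succ, Nat.factorial, abs_of_nonneg h0, abs_neg] at hb1 hb2
  rw [Real.cosh_eq]
  nlinarith

private lemma tanh_ge_half {x : ℝ} (hx : 1 ≤ x) : 1 / 2 ≤ Real.tanh x := by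
  have hx0 : (0:ℝ) < x := lt_of_lt_of_le one_pos hx
  rw [Real.tanh_eq_sinh_div_cosh, le_div_iff₀ (Real.cosh_pos x), Real.sinh_eq, Real.cosh_eq]
  have h1 : Real.exp 1 ≤ Real.exp x := Real.exp_le_exp.mpr hx
  have h2 : Real.exp (-x) ≤ Real.exp (-1) := Real.exp_le_exp.mpr (by linarith)
  have h3 : (2 : ℝ) ≤ Real.exp 1 := by
    have := Real.add_one_le_exp 1
    linarith
  have h4 : Real.exp (-1) ≤ 1 / 2 := by
    rw [Real.exp_neg, inv_le_comm₀ (Real.exp_pos 1) (by norm_num)]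
    linarith
  nlinarith [Real.exp_pos x, Real.exp_pos (-x)]

private lemma key_bound (x : ℝ) (hx0 : 0 < x) (K : ℝ) (hK1 : 1 ≤ K) :
    0 ≤ (1 + K) / (1 + K * Real.sqrt (Real.tanh x / x)) - 1 ∧
    (1 + K) / (1 + K * Real.sqrt (Real.tanh x / x)) - 1 ≤ 2 * Real.sqrt x := by
  have hK0 : (0:ℝ) < K := lt_of_lt_of_le one_pos hK1
  set t : ℝ := Real.tanh x with htdef
  have ht0 : 0 < t := tanh_pos' hx0
  have htx : t ≤ x := tanh_le_self hx0.le
  set h : ℝ := Real.sqrt (t / x) with hhdef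
  have hh0 : 0 < h := Real.sqrt_pos.mpr (div_pos ht0 hx0)
  have hh2 : h ^ 2 = t / x := Real.sq_sqrt (div_pos ht0 hx0).le
  have hh1 : h ≤ 1 := by
    rw [hhdef, show (1:ℝ) = Real.sqrt 1 by simp]
    exact Real.sqrt_le_sqrt (by rw [div_le_one hx0]; exact htx)
  have hD0 : 0 < 1 + K * h := by positivity
  have hE : (1 + K) / (1 + K * h) - 1 = K * (1 - h) / (1 + K * h) := by
    field_simp
    ring
  set s : ℝ := Real.sqrt x with hsdef
  have hs0 : 0 < s := Real.sqrt_pos.mpr hx0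
  have hs2 : s ^ 2 = x := Real.sq_sqrt hx0.le
  clear_value t h s
  constructor
  · rw [hE]
    apply div_nonneg _ hD0.le
    exact mul_nonneg hK0.le (by linarith)
  · have step1 : (1 + K) / (1 + K * h) - 1 ≤ (1 - h) / h := by
      rw [hE, div_le_div_iff₀ hD0 hh0]
      nlinarith
    refine step1.trans ?_
    rw [div_le_iff₀ hh0]
    rcases le_or_gt x 1 with hxle | hxgt
    · -- small x
      have hcosh : Real.cosh x ≤ 1 + x ^ 2 := cosh_le_one_add_sq hx0.le hxle
      have hsinh : x ≤ Real.sinh x := Real.self_le_sinh_iff.mpr hx0.le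
      have htc : t * Real.cosh x = Real.sinh x := by
        rw [htdef, Real.tanh_eq_sinh_div_cosh]
        field_simp
      have ht_lb : x ≤ t * (1 + x ^ 2) := by
        have h5 : t * Real.cosh x ≤ t * (1 + x ^ 2) :=
          mul_le_mul_of_nonneg_left hcosh ht0.le
        linarith
      have hxt : x - t ≤ x ^ 3 := by nlinarith
      have h1h2 : 1 - h ^ 2 ≤ x ^ 2 := by
        rw [hh2]
        have h6 : (x - t) / x ≤ x ^ 3 / x := by gcongr
        have hx3 : x ^ 3 / x = x ^ 2 := by
          field_simp
        have h7 : 1 - t / x = (x - t) / x := by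
          field_simp
        linarith
      have hhh : h ^ 2 ≤ h := by
        have hm := mul_le_mul_of_nonneg_left hh1 hh0.le
        rw [mul_one] at hm
        calc h ^ 2 = h * h := pow_two h
        _ ≤ h := hm
      have h1h : 1 - h ≤ x ^ 2 := by linarith
      have hh2lb : 1 / 2 ≤ h ^ 2 := by
        rw [hh2, le_div_iff₀ hx0]
        have hx2le1 : x ^ 2 ≤ 1 := by nlinarith
        have hm := mul_le_mul_of_nonneg_left hx2le1 ht0.le
        rw [mul_one] at hm
        nlinarith [hm, ht_lb]
      have hhalf : 1 / 2 ≤ h := by linarith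
      have hs1 : s ≤ 1 := by rw [hsdef]; exact Real.sqrt_le_one.mpr hxle
      have hss : s * s ≤ s := by
        have hm := mul_le_mul_of_nonneg_left hs1 hs0.le
        rwa [mul_one] at hm
      have hx_le_s : x ≤ s := by
        rw [← hs2, pow_two]
        exact hss
      have hxs : x ^ 2 ≤ s := by
        have hm := mul_le_mul_of_nonneg_left hxle hx0.le
        rw [mul_one] at hm
        have hxx : x ^ 2 ≤ x := by rw [pow_two]; linarith
        linarith
      have hfin := mul_le_mul_of_nonneg_left hhalf (by positivity : (0:ℝ) ≤ 2 * s)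
      linarith
    · -- large x
      have ht_lb : 1 / 2 ≤ t := by rw [htdef]; exact tanh_ge_half hxgt.le
      have hkey : h ^ 2 * x = t := by
        rw [hh2]
        field_simp
      have hsh2 : 1 / 2 ≤ (s * h) ^ 2 := by
        have he : (s * h) ^ 2 = h ^ 2 * x := by rw [mul_pow, hs2]; ring
        rw [he, hkey]
        exact ht_lb
      have hp : 1 / 2 ≤ s * h := by
        nlinarith [mul_nonneg hs0.le hh0.le, hsh2]
      linarith

/-- There is C > 0 with |(1+k)/(1 + k√(tanh(√μ k)/(√μ k))) - 1| ≤ C μ^{1/4} k^{1/2}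
for all μ ∈ (0,1) and positive integers k. -/
theorem abs_J_mu_le :
    ∃ C : ℝ, 0 < C ∧ ∀ (μ : ℝ), 0 < μ → μ < 1 → ∀ (k : ℕ), 1 ≤ k →
      |(1 + (k : ℝ))
          / (1 + (k : ℝ) * Real.sqrt (Real.tanh (Real.sqrt μ * k)
              / (Real.sqrt μ * k))) - 1|
        ≤ C * μ ^ (1 / 4 : ℝ) * Real.sqrt k := by
  refine ⟨2, by norm_num, ?_⟩
  intro μ hμ0 hμ1 k hk
  have hK1 : (1 : ℝ) ≤ (k : ℝ) := by exact_mod_cast hk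
  have hx0 : 0 < Real.sqrt μ * (k : ℝ) :=
    mul_pos (Real.sqrt_pos.mpr hμ0) (lt_of_lt_of_le one_pos hK1)
  obtain ⟨hnn, hle⟩ := key_bound (Real.sqrt μ * (k : ℝ)) hx0 (k : ℝ) hK1
  rw [abs_of_nonneg hnn]
  refine hle.trans (le_of_eq ?_)
  rw [Real.sqrt_mul (Real.sqrt_nonneg μ)]
  have h4 : Real.sqrt (Real.sqrt μ) = μ ^ (1 / 4 : ℝ) := by
    rw [Real.sqrt_eq_rpow, Real.sqrt_eq_rpow, ← Real.rpow_mul hμ0.le]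
    norm_num
  rw [h4]
  ring
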